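/- A countable group G is right-orderable if and only if there exists an injective map t : G → ℝ and a right action of G on ℝ by order-preserving homeomorphisms such that t(gh) = t(g)·h for all g, h ∈ G (i.e., t is equivariant for right multiplication on G). -/

import Mathlib

open Set

namespace Stmt18Aux

/-- Extension of an order automorphism of `ℚ` to `ℝ`. -/
noncomputable def extFun (e : ℚ ≃o ℚ) : ℝ → ℝ :=
  fun x => sSup ((fun q : ℚ => (e q : ℝ)) '' {q : ℚ | (q : ℝ) < x})

lemma set_nonempty (e : ℚ ≃o ℚ) (x : ℝ) :
    ((fun q : ℚ => (e q : ℝ)) '' {q : ℚ | (q : ℝ) < x}).Nonempty := by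
  obtain ⟨q, hq⟩ := exists_rat_lt x
  exact ⟨_, ⟨q, hq, rfl⟩⟩

lemma set_bddAbove (e : ℚ ≃o ℚ) (x : ℝ) :
    BddAbove ((fun q : ℚ => (e q : ℝ)) '' {q : ℚ | (q : ℝ) < x}) := by
  obtain ⟨r, hr⟩ := exists_rat_gt x
  refine ⟨(e r : ℝ), ?_⟩
  rintro y ⟨q, hq, rfl⟩
  have hqr : q < r := by exact_mod_cast (lt_trans hq hr)
  show ((e q : ℚ) : ℝ) ≤ ((e r : ℚ) : ℝ)
  exact_mod_cast e.monotone hqr.le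

lemma extFun_mono (e : ℚ ≃o ℚ) : Monotone (extFun e) := fun x y hxy =>
  csSup_le_csSup (set_bddAbove e y) (set_nonempty e x)
    (Set.image_mono fun q hq => lt_of_lt_of_le hq hxy)

lemma rat_le_extFun (e : ℚ ≃o ℚ) {x : ℝ} {q : ℚ} (h : (q : ℝ) < x) :
    (e q : ℝ) ≤ extFun e x :=
  le_csSup (set_bddAbove e x) ⟨q, h, rfl⟩

lemma le_of_forall_rat {x T : ℝ} (h : ∀ r : ℚ, (r : ℝ) < x → (r : ℝ) ≤ T) : x ≤ T := by
  by_contra hc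
  push_neg at hc
  obtain ⟨r, hr1, hr2⟩ := exists_rat_btwn hc
  exact absurd (h r hr2) (not_le.2 hr1)

lemma extFun_symm_extFun (e : ℚ ≃o ℚ) (x : ℝ) : extFun e.symm (extFun e x) = x := by
  apply le_antisymm
  · apply csSup_le (set_nonempty _ _)
    rintro y ⟨p, hp, rfl⟩
    obtain ⟨z, ⟨q, hq, rfl⟩, hpz⟩ := exists_lt_of_lt_csSup (set_nonempty e x) hp
    have hpz' : (p : ℝ) < ((e q : ℚ) : ℝ) := hpz
    have hpq : p < e q := by exact_mod_cast hpz'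
    have h1 : e.symm p < q := by
      have := e.symm.strictMono hpq
      simpa using this
    calc ((e.symm p : ℚ) : ℝ) ≤ (q : ℝ) := by exact_mod_cast h1.le
      _ ≤ x := hq.le
  · apply le_of_forall_rat
    intro r hr
    obtain ⟨r', hr1, hr2⟩ := exists_rat_btwn hr
    have hrr' : r < r' := by exact_mod_cast hr1
    have h1 : (e r' : ℝ) ≤ extFun e x := rat_le_extFun e hr2
    have h2 : (e r : ℝ) < extFun e x :=
      lt_of_lt_of_le (by exact_mod_cast e.strictMono hrr') h1
    have h3 := rat_le_extFun e.symm h2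
    simpa using h3

lemma extFun_ratCast (e : ℚ ≃o ℚ) (q : ℚ) : extFun e (q : ℝ) = (e q : ℝ) := by
  apply le_antisymm
  · apply csSup_le (set_nonempty _ _)
    rintro y ⟨p, hp, rfl⟩
    have hpq : p < q := by exact_mod_cast hp
    show ((e p : ℚ) : ℝ) ≤ ((e q : ℚ) : ℝ)
    exact_mod_cast e.monotone hpq.le
  · apply le_of_forall_rat
    intro s hs
    have hsq : s < e q := by exact_mod_cast hs
    have h1 : e.symm s < q := by
      have := e.symm.strictMono hsq
      simpa using this
    have h2 : ((e.symm s : ℚ) : ℝ) < (q : ℝ) := by exact_mod_cast h1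
    have := rat_le_extFun e h2
    simpa using this

lemma extFun_injective (e : ℚ ≃o ℚ) : Function.Injective (extFun e) :=
  Function.LeftInverse.injective (g := extFun e.symm) (extFun_symm_extFun e)

lemma extFun_strictMono (e : ℚ ≃o ℚ) : StrictMono (extFun e) :=
  (extFun_mono e).strictMono_of_injective (extFun_injective e)

lemma extFun_surjective (e : ℚ ≃o ℚ) : Function.Surjective (extFun e) := by
  intro y
  refine ⟨extFun e.symm y, ?_⟩
  have := extFun_symm_extFun e.symm y
  simpa using this

/-- The extension as an order isomorphism of `ℝ`. -/
noncomputable def extIso (e : ℚ ≃o ℚ) : ℝ ≃o ℝ :=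
  StrictMono.orderIsoOfSurjective (extFun e) (extFun_strictMono e) (extFun_surjective e)

lemma extIso_apply (e : ℚ ≃o ℚ) (x : ℝ) : extIso e x = extFun e x := by
  rw [extIso, StrictMono.coe_orderIsoOfSurjective]

lemma extFun_continuous (e : ℚ ≃o ℚ) : Continuous (extFun e) := by
  have h := (extIso e).continuous
  have : ⇑(extIso e) = extFun e := funext fun x => extIso_apply e x
  rwa [this] at h

lemma extFun_comp (e₁ e₂ : ℚ ≃o ℚ) (x : ℝ) :
    extFun e₂ (extFun e₁ x) = extFun (e₁.trans e₂) x := by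
  have key : (extFun e₂ ∘ extFun e₁) = extFun (e₁.trans e₂) := by
    apply Rat.denseRange_cast.equalizer
      ((extFun_continuous e₂).comp (extFun_continuous e₁)) (extFun_continuous (e₁.trans e₂))
    funext q
    simp only [Function.comp_apply, extFun_ratCast]
    rfl
  exact congrFun key x

end Stmt18Aux

open Stmt18Aux in
/-- A countable group G is right-orderable iff there is an injection t : G → ℝ
and a right action of G on ℝ by order-preserving homeomorphisms with
t(gh) = t(g)·h. -/
theorem stmt_18 {G : Type*} [Group G] [Countable G] :
    (∃ lt : G → G → Prop,
      (∀ x y z, lt x y → lt y z → lt x z) ∧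
      (∀ x, ¬ lt x x) ∧
      (∀ x y, ¬ (lt x y ∧ lt y x)) ∧
      (∀ x y, x ≠ y → lt x y ∨ lt y x) ∧
      (∀ g h f : G, lt g h → lt (g * f) (h * f))) ↔
    (∃ (t : G → ℝ) (ρ : G → (ℝ ≃ₜ ℝ)),
      Function.Injective t ∧
      (∀ g, StrictMono (ρ g)) ∧
      (∀ g h x, ρ (g * h) x = ρ h (ρ g x)) ∧
      (∀ g h : G, t (g * h) = ρ h (t g))) := by
  constructor
  · rintro ⟨lt, htrans, hirr, hasym, htot, hmul⟩
    -- Equip G with the linear order coming from `lt`.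
    letI : LinearOrder G :=
      { le := fun a b => lt a b ∨ a = b
        lt := lt
        le_refl := fun a => Or.inr rfl
        le_trans := by
          rintro a b c (h1 | rfl) (h2 | rfl)
          · exact Or.inl (htrans _ _ _ h1 h2)
          · exact Or.inl h1
          · exact Or.inl h2
          · exact Or.inr rfl
        le_antisymm := by
          rintro a b (h1 | rfl) (h2 | h3)
          · exact absurd ⟨h1, h2⟩ (hasym a b)
          · exact h3.symm
          · rfl
          · rfl
        le_total := by
          intro a b
          rcases eq_or_ne a b with rfl | h
          · exact Or.inl (Or.inr rfl)
          · rcases htot a b h with h' | h'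
            · exact Or.inl (Or.inl h')
            · exact Or.inr (Or.inl h')
        lt_iff_le_not_ge := by
          intro a b
          constructor
          · intro h
            refine ⟨Or.inl h, ?_⟩
            rintro (h' | rfl)
            · exact hasym a b ⟨h, h'⟩
            · exact hirr _ h
          · rintro ⟨h1 | rfl, h2⟩
            · exact h1
            · exact absurd (Or.inr rfl) h2
        toDecidableLE := fun _ _ => Classical.dec _ }
    have hlt : ∀ a b : G, a < b ↔ lt a b := fun a b => Iff.rfl
    have hmulSM : ∀ g : G, StrictMono (fun a : G => a * g) := by
      intro g a b hab
      exact hmul a b g ((hlt a b).1 hab)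
    -- The lex order G ×ₗ ℚ is a countable dense linear order without endpoints.
    haveI : Countable (G ×ₗ ℚ) := Countable.of_equiv (G × ℚ) toLex
    haveI : Nonempty (G ×ₗ ℚ) := ⟨toLex (1, 0)⟩
    haveI : DenselyOrdered (G ×ₗ ℚ) := by
      constructor
      intro a b hab
      rcases Prod.Lex.lt_iff.1 hab with h | ⟨h1, h2⟩
      · refine ⟨toLex ((ofLex a).1, (ofLex a).2 + 1), ?_, ?_⟩
        · exact Prod.Lex.lt_iff.2 (Or.inr ⟨rfl, lt_add_one _⟩)
        · exact Prod.Lex.lt_iff.2 (Or.inl h)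
      · obtain ⟨m, hm1, hm2⟩ := exists_between h2
        refine ⟨toLex ((ofLex a).1, m), ?_, ?_⟩
        · exact Prod.Lex.lt_iff.2 (Or.inr ⟨rfl, hm1⟩)
        · exact Prod.Lex.lt_iff.2 (Or.inr ⟨h1, hm2⟩)
    haveI : NoMaxOrder (G ×ₗ ℚ) := by
      constructor
      intro a
      exact ⟨toLex ((ofLex a).1, (ofLex a).2 + 1),
        Prod.Lex.lt_iff.2 (Or.inr ⟨rfl, lt_add_one _⟩)⟩
    haveI : NoMinOrder (G ×ₗ ℚ) := by
      constructor
      intro a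
      exact ⟨toLex ((ofLex a).1, (ofLex a).2 - 1),
        Prod.Lex.lt_iff.2 (Or.inr ⟨rfl, sub_one_lt _⟩)⟩
    obtain ⟨φ⟩ := Order.iso_of_countable_dense (α := G ×ₗ ℚ) (β := ℚ)
    -- right multiplication on G ×ₗ ℚ
    have rmulSM : ∀ g : G, StrictMono (fun p : G ×ₗ ℚ => toLex ((ofLex p).1 * g, (ofLex p).2)) := by
      intro g a b hab
      rcases Prod.Lex.lt_iff.1 hab with h | ⟨h1, h2⟩
      · exact Prod.Lex.lt_iff.2 (Or.inl (hmulSM g h))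
      · exact Prod.Lex.lt_iff.2 (Or.inr ⟨by show (ofLex a).1 * g = (ofLex b).1 * g; rw [h1], h2⟩)
    have rmulSurj : ∀ g : G,
        Function.Surjective (fun p : G ×ₗ ℚ => toLex ((ofLex p).1 * g, (ofLex p).2)) := by
      intro g p
      refine ⟨toLex ((ofLex p).1 * g⁻¹, (ofLex p).2), ?_⟩
      simp [mul_assoc]
    let rmul : G → (G ×ₗ ℚ) ≃o (G ×ₗ ℚ) := fun g =>
      StrictMono.orderIsoOfSurjective _ (rmulSM g) (rmulSurj g)
    have rmul_apply : ∀ g (p : G ×ₗ ℚ), rmul g p = toLex ((ofLex p).1 * g, (ofLex p).2) := by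
      intro g p
      simp only [rmul, StrictMono.coe_orderIsoOfSurjective]
    -- transport to ℚ
    let E : G → ℚ ≃o ℚ := fun g => (φ.symm.trans (rmul g)).trans φ
    have E_apply : ∀ g q, E g q = φ (rmul g (φ.symm q)) := fun g q => rfl
    have hE : ∀ g h : G, E (g * h) = (E g).trans (E h) := by
      intro g h
      apply OrderIso.ext
      funext q
      show φ (rmul (g * h) (φ.symm q)) = φ (rmul h (φ.symm (φ (rmul g (φ.symm q)))))
      rw [φ.symm_apply_apply]
      congr 1
      rw [rmul_apply, rmul_apply, rmul_apply]
      simp [mul_assoc]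
    refine ⟨fun g => (((φ (toLex (g, (0 : ℚ)))) : ℚ) : ℝ),
      fun g => (extIso (E g)).toHomeomorph, ?_, ?_, ?_, ?_⟩
    · intro a b hab
      have hab' : ((φ (toLex (a, (0 : ℚ))) : ℚ) : ℝ) = ((φ (toLex (b, (0 : ℚ))) : ℚ) : ℝ) := hab
      have h1 : φ (toLex (a, (0 : ℚ))) = φ (toLex (b, (0 : ℚ))) := by exact_mod_cast hab'
      have h2 := φ.injective h1
      have h3 : ((a, (0 : ℚ)) : G × ℚ) = (b, 0) := toLex.injective h2
      exact congrArg Prod.fst h3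
    · intro g
      have : ⇑((extIso (E g)).toHomeomorph) = extFun (E g) := by
        funext x
        rw [OrderIso.coe_toHomeomorph, extIso_apply]
      rw [this]
      exact extFun_strictMono (E g)
    · intro g h x
      show extIso (E (g * h)) x = extIso (E h) (extIso (E g) x)
      rw [extIso_apply, extIso_apply, extIso_apply, extFun_comp, hE]
    · intro g h
      show (((φ (toLex (g * h, (0 : ℚ)))) : ℚ) : ℝ) =
        extIso (E h) (((φ (toLex (g, (0 : ℚ)))) : ℚ) : ℝ)
      rw [extIso_apply, extFun_ratCast]
      norm_cast
      rw [E_apply, φ.symm_apply_apply, rmul_apply]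
      simp
  · rintro ⟨t, ρ, hinj, hmono, _hact, heq⟩
    refine ⟨fun a b => t a < t b, fun x y z => lt_trans, fun x => lt_irrefl _,
      fun x y h => absurd h.2 (lt_asymm h.1), ?_, ?_⟩
    · intro x y hxy
      exact lt_or_gt_of_ne (fun h => hxy (hinj h))
    · intro g h f hgh
      rw [heq, heq]
      exact hmono f hgh
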